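/- Let G be a group such that for every m ≥ 1, every automorphism of G × ℤ^m has finitely generated fixed subgroup. Then the derived subgroup [G, G] is finitely generated. -/

import Mathlib

/-- The fixed subgroup of an endomorphism of a group. -/
def fixedSubgroup {G : Type*} [Group G] (φ : G →* G) : Subgroup G where
  carrier := {g | φ g = g}
  one_mem' := map_one φ
  mul_mem' := by
    intro a b ha hb
    simp only [Set.mem_setOf_eq, map_mul] at *
    rw [ha, hb]
  inv_mem' := by
    intro a ha
    simp only [Set.mem_setOf_eq, map_inv] at *
    rw [ha]

/-- The "shift" automorphism of `G × M` associated to a homomorphism `f : G →* M` into an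
abelian group `M`, sending `(g, t)` to `(g, t * f g)`. -/
def shiftEquiv {G M : Type*} [Group G] [CommGroup M] (f : G →* M) : (G × M) ≃* (G × M) where
  toFun p := (p.1, p.2 * f p.1)
  invFun p := (p.1, p.2 * (f p.1)⁻¹)
  left_inv p := by simp [mul_assoc]
  right_inv p := by simp [mul_assoc]
  map_mul' p q := by
    ext
    · rfl
    · simp only [Prod.fst_mul, Prod.snd_mul, map_mul]
      exact mul_mul_mul_comm p.2 q.2 (f p.1) (f q.1)

lemma mem_fixedSubgroup_shiftEquiv {G M : Type*} [Group G] [CommGroup M] (f : G →* M)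
    (p : G × M) : p ∈ fixedSubgroup (shiftEquiv f).toMonoidHom ↔ f p.1 = 1 := by
  constructor
  · intro hp
    have h2 : p.2 * f p.1 = p.2 := congrArg Prod.snd hp
    exact (mul_eq_left).mp h2
  · intro hp
    have : (shiftEquiv f) p = p := by
      simp only [shiftEquiv, MulEquiv.coe_mk, Equiv.coe_fn_mk, hp, mul_one]
    exact this

/-- If the shift automorphism has finitely generated fixed subgroup, then `ker f` is a
finitely generated group. -/
lemma ker_fg_of_fixed_fg {G M : Type*} [Group G] [CommGroup M] (f : G →* M)
    (hfix : (fixedSubgroup (shiftEquiv f).toMonoidHom).FG) : Group.FG f.ker := by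
  haveI : Group.FG (fixedSubgroup (shiftEquiv f).toMonoidHom) :=
    (Group.fg_iff_subgroup_fg _).mpr hfix
  -- project the fixed subgroup onto ker f
  set F := fixedSubgroup (shiftEquiv f).toMonoidHom
  have hmem : ∀ p : F, f (p : G × M).1 = 1 := fun p =>
    (mem_fixedSubgroup_shiftEquiv f _).mp p.2
  let π : F →* f.ker :=
    { toFun := fun p => ⟨(p : G × M).1, hmem p⟩
      map_one' := rfl
      map_mul' := fun _ _ => rfl }
  have hπ : Function.Surjective π := by
    rintro ⟨g, hg⟩
    refine ⟨⟨(g, 1), ?_⟩, rfl⟩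
    exact (mem_fixedSubgroup_shiftEquiv f (g, 1)).mpr hg
  exact Group.fg_of_surjective hπ

/-- If `G × ℤᵐ` has FGFP_a for every `m ≥ 1`, then the derived subgroup `[G, G]`
is finitely generated. -/
theorem commutator_fg_of_fgfp_prod_int_pow {G : Type*} [Group G]
    (h : ∀ m : ℕ, 1 ≤ m →
      ∀ φ : (G × Multiplicative (Fin m → ℤ)) ≃* (G × Multiplicative (Fin m → ℤ)),
        (fixedSubgroup φ.toMonoidHom).FG) :
    (commutator G).FG := by
  classical
  -- Step 1 : G is finitely generated (identity automorphism, m = 1).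
  have hGfg : Group.FG G := by
    have h1 := h 1 le_rfl (MulEquiv.refl _)
    have htop : fixedSubgroup (MulEquiv.refl
        (G × Multiplicative (Fin 1 → ℤ))).toMonoidHom = ⊤ := by
      ext p; simp [fixedSubgroup]
    rw [htop] at h1
    haveI : Group.FG (G × Multiplicative (Fin 1 → ℤ)) := Group.fg_def.mpr h1
    exact Group.fg_of_surjective (f := MonoidHom.fst G (Multiplicative (Fin 1 → ℤ)))
      Prod.fst_surjective
  haveI := hGfg
  -- Step 2 : the abelianization is a finitely generated abelian group; apply the
  -- structure theorem.
  haveI hAbfg : Group.FG (Abelianization G) :=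
    Group.fg_of_surjective (f := Abelianization.of) (fun a =>
      QuotientGroup.mk_surjective a)
  haveI : AddGroup.FG (Additive (Abelianization G)) := GroupFG.iff_add_fg.mp hAbfg
  obtain ⟨n, ι, fι, p, hp, e, ⟨σ⟩⟩ :=
    AddCommGroup.equiv_free_prod_directSum_zmod (Additive (Abelianization G))
  haveI : ∀ i, NeZero (p i ^ e i) := fun i => ⟨pow_ne_zero _ (hp i).ne_zero⟩
  haveI : Finite (DirectSum ι fun i => ZMod (p i ^ e i)) := by
    exact Finite.of_injective _ (DFinsupp.equivFunOnFintype).injective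
  set m : ℕ := max n 1 with hm
  have hm1 : 1 ≤ m := le_max_right n 1
  have hnm : n ≤ m := le_max_left n 1
  -- the embedding (Fin n →₀ ℤ) →+ (Fin m → ℤ)
  let ext : (Fin n →₀ ℤ) →+ (Fin m → ℤ) :=
    { toFun := fun x j => if hj : (j : ℕ) < n then x ⟨j, hj⟩ else 0
      map_zero' := by ext j; by_cases hj : (j : ℕ) < n <;> simp [hj]
      map_add' := by
        intro x y; ext j; by_cases hj : (j : ℕ) < n <;> simp [hj] }
  have hext_inj : Function.Injective ext := by
    intro x y hxy
    ext i
    have := congrFun hxy (Fin.castLE hnm i)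
    simpa [ext, i.isLt] using this
  -- the homomorphism F from the abelianization to ℤ^m
  let F : Abelianization G →* Multiplicative (Fin m → ℤ) :=
    { toFun := fun a => Multiplicative.ofAdd (ext (σ (Additive.ofMul a)).1)
      map_one' := by
        have : σ (Additive.ofMul (1 : Abelianization G)) = 0 := map_zero σ
        simp [this]
      map_mul' := by
        intro a b
        have : σ (Additive.ofMul (a * b)) = σ (Additive.ofMul a) + σ (Additive.ofMul b) :=
          map_add σ _ _
        simp only [this, Prod.fst_add, map_add]
        rfl }
  -- the kernel of F is finite
  have hFker : Finite F.ker := by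
    refine Finite.of_injective (fun a => (σ (Additive.ofMul (a : Abelianization G))).2) ?_
    rintro ⟨a, ha⟩ ⟨b, hb⟩ hab
    have ha' : ext (σ (Additive.ofMul a)).1 = 0 := by
      have := MonoidHom.mem_ker.mp ha
      exact congrArg Multiplicative.toAdd this
    have hb' : ext (σ (Additive.ofMul b)).1 = 0 := by
      have := MonoidHom.mem_ker.mp hb
      exact congrArg Multiplicative.toAdd this
    have h1 : (σ (Additive.ofMul a)).1 = (σ (Additive.ofMul b)).1 :=
      hext_inj (ha'.trans hb'.symm)
    have h2 : σ (Additive.ofMul a) = σ (Additive.ofMul b) := Prod.ext h1 hab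
    have := σ.injective h2
    exact Subtype.ext (Additive.ofMul.injective this)
  -- f : G →* ℤ^m ; its kernel K is finitely generated by the hypothesis
  set f : G →* Multiplicative (Fin m → ℤ) := F.comp Abelianization.of with hf
  haveI hKfg : Group.FG f.ker := ker_fg_of_fixed_fg f (h m hm1 (shiftEquiv f))
  -- [G,G] ≤ ker f
  have hle : commutator G ≤ f.ker := Abelianization.commutator_subset_ker f
  -- the quotient of K by [G,G] injects into ker F, hence is finite
  set K := f.ker
  set C : Subgroup K := (commutator G).subgroupOf K with hC
  let q : K →* F.ker :=
    { toFun := fun g => ⟨Abelianization.of (g : G), g.2⟩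
      map_one' := rfl
      map_mul' := fun _ _ => rfl }
  have hqker : q.ker = C := by
    ext g
    simp only [MonoidHom.mem_ker, hC, Subgroup.mem_subgroupOf]
    constructor
    · intro hg
      have : Abelianization.of (g : G) = 1 := congrArg Subtype.val hg
      exact (QuotientGroup.eq_one_iff _).mp this
    · intro hg
      exact Subtype.ext ((QuotientGroup.eq_one_iff _).mpr hg)
  have hfinq : Finite (K ⧸ C) := by
    rw [← hqker]
    exact Finite.of_injective (QuotientGroup.kerLift q) (QuotientGroup.kerLift_injective q)
  haveI : C.FiniteIndex := Subgroup.finiteIndex_of_finite_quotient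
  haveI hCfg : Group.FG C := Subgroup.fg_of_index_ne_zero C
  -- transfer back to [G,G]
  have : Group.FG (commutator G) :=
    Group.fg_of_surjective (f := (Subgroup.subgroupOfEquivOfLe hle).toMonoidHom)
      (Subgroup.subgroupOfEquivOfLe hle).surjective
  exact (Group.fg_iff_subgroup_fg _).mp this
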